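/- arXiv:1412.0301 — 3 statements merged into one kernel-verified Lean document; each statement's English description precedes it below -/
import Mathlib

section
/- Let A be a finite weighted point set in ℝ^d with weights w_i ≥ 0 (not all zero), let C be a finite nonempty set of existing centers with D(x) = dist(x, C), and suppose a new center x is chosen from A with probability proportional to w_i·D(x_i)². Then the expected new cost E[Σ_{j∈A} w_j · min(D(x_j), ‖x - x_j‖)²] ≤ 8 · Σ_{j∈A} w_j ‖x_j - c_A‖², where c_A is the weighted center of mass of A. -/
open Finset RealInnerProductSpace

theorem weighted_D2_sampling_eight_approx {d : ℕ} {ι : Type*}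
    (A : Finset ι) (x : ι → EuclideanSpace ℝ (Fin d)) (w : ι → ℝ)
    (hw : ∀ i ∈ A, 0 ≤ w i)
    (C : Finset (EuclideanSpace ℝ (Fin d))) (hC : C.Nonempty)
    (D : EuclideanSpace ℝ (Fin d) → ℝ)
    (hD : ∀ q, D q = C.inf' hC (fun p => ‖q - p‖))
    (S : ℝ) (hS : S = ∑ i ∈ A, w i * D (x i) ^ 2) (hSpos : 0 < S)
    (W : ℝ) (hW : W = ∑ i ∈ A, w i) (hWpos : 0 < W)
    (cA : EuclideanSpace ℝ (Fin d)) (hcA : cA = W⁻¹ • ∑ i ∈ A, w i • x i) :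
    ∑ i ∈ A, (w i * D (x i) ^ 2 / S) *
        (∑ j ∈ A, w j * min (D (x j)) ‖x i - x j‖ ^ 2)
      ≤ 8 * ∑ j ∈ A, w j * ‖x j - cA‖ ^ 2 := by
  have hDnn : ∀ q, 0 ≤ D q := by
    intro q; rw [hD]
    exact Finset.le_inf' hC _ (fun p _ => norm_nonneg _)
  have hLip : ∀ i j : ι, D (x i) ≤ D (x j) + ‖x i - x j‖ := by
    intro i j
    obtain ⟨p, hp, hpe⟩ := Finset.exists_mem_eq_inf' hC (fun p => ‖x j - p‖)
    have h1 : D (x i) ≤ ‖x i - p‖ := by rw [hD]; exact Finset.inf'_le _ hp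
    have h2 : D (x j) = ‖x j - p‖ := by rw [hD, hpe]
    have h3 : ‖x i - p‖ ≤ ‖x i - x j‖ + ‖x j - p‖ := by
      have := dist_triangle (x i) (x j) p
      simpa [dist_eq_norm] using this
    linarith
  have hsq : ∀ i j : ι, D (x i) ^ 2 ≤ 2 * D (x j) ^ 2 + 2 * ‖x i - x j‖ ^ 2 := by
    intro i j
    nlinarith [hLip i j, hDnn (x i), hDnn (x j), norm_nonneg (x i - x j),
      sq_nonneg (D (x j) - ‖x i - x j‖)]
  set T := ∑ j ∈ A, w j * ‖x j - cA‖ ^ 2 with hT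
  have hTnn : 0 ≤ T :=
    Finset.sum_nonneg fun j hj => mul_nonneg (hw j hj) (sq_nonneg _)
  -- the weighted centroid property
  have hzero : ∑ i ∈ A, w i • (x i - cA) = (0 : EuclideanSpace ℝ (Fin d)) := by
    have h1 : ∑ i ∈ A, w i • (x i - cA)
        = (∑ i ∈ A, w i • x i) - W • cA := by
      rw [hW, Finset.sum_smul, ← Finset.sum_sub_distrib]
      exact Finset.sum_congr rfl fun i _ => smul_sub _ _ _
    rw [h1, hcA, smul_smul, mul_inv_cancel₀ hWpos.ne', one_smul, sub_self]
  -- variance identity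
  have hvar : ∑ i ∈ A, ∑ j ∈ A, w i * w j * ‖x i - x j‖ ^ 2 = 2 * W * T := by
    have key : ∀ i j : ι, w i * w j * ‖x i - x j‖ ^ 2
        = w i * (w j * (‖x i - cA‖ ^ 2 + ‖x j - cA‖ ^ 2))
          - 2 * (inner ℝ (w i • (x i - cA)) (w j • (x j - cA)) : ℝ) := by
      intro i j
      have h : x i - x j = (x i - cA) - (x j - cA) := by abel
      rw [h, real_inner_smul_left, real_inner_smul_right, norm_sub_sq_real]
      ring
    have cross : ∑ i ∈ A, ∑ j ∈ A, (inner ℝ (w i • (x i - cA)) (w j • (x j - cA)) : ℝ)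
        = (0 : ℝ) := by
      have : ∑ i ∈ A, ∑ j ∈ A, (inner ℝ (w i • (x i - cA)) (w j • (x j - cA)) : ℝ)
          = (inner ℝ (∑ i ∈ A, w i • (x i - cA)) (∑ j ∈ A, w j • (x j - cA)) : ℝ) := by
        rw [sum_inner]
        exact Finset.sum_congr rfl fun i _ => (inner_sum _ _ _).symm
      rw [this, hzero, inner_zero_left]
    have first : ∑ i ∈ A, ∑ j ∈ A,
        w i * (w j * (‖x i - cA‖ ^ 2 + ‖x j - cA‖ ^ 2)) = 2 * W * T := by
      have hrow : ∀ i : ι, ∑ j ∈ A, w i * (w j * (‖x i - cA‖ ^ 2 + ‖x j - cA‖ ^ 2))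
          = w i * (W * ‖x i - cA‖ ^ 2) + w i * T := by
        intro i
        rw [← Finset.mul_sum]
        have : ∑ j ∈ A, w j * (‖x i - cA‖ ^ 2 + ‖x j - cA‖ ^ 2)
            = W * ‖x i - cA‖ ^ 2 + T := by
          rw [hW, hT, Finset.sum_mul, ← Finset.sum_add_distrib]
          exact Finset.sum_congr rfl fun j _ => by ring
        rw [this, mul_add]
      calc ∑ i ∈ A, ∑ j ∈ A, w i * (w j * (‖x i - cA‖ ^ 2 + ‖x j - cA‖ ^ 2))
          = ∑ i ∈ A, (w i * (W * ‖x i - cA‖ ^ 2) + w i * T) :=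
            Finset.sum_congr rfl fun i _ => hrow i
        _ = W * (∑ i ∈ A, w i * ‖x i - cA‖ ^ 2) + (∑ i ∈ A, w i) * T := by
            rw [Finset.sum_add_distrib, Finset.mul_sum, ← Finset.sum_mul]
            congr 1
            exact Finset.sum_congr rfl fun i _ => by ring
        _ = 2 * W * T := by rw [← hT, ← hW]; ring
    calc ∑ i ∈ A, ∑ j ∈ A, w i * w j * ‖x i - x j‖ ^ 2
        = ∑ i ∈ A, ∑ j ∈ A,
            (w i * (w j * (‖x i - cA‖ ^ 2 + ‖x j - cA‖ ^ 2))
              - 2 * (inner ℝ (w i • (x i - cA)) (w j • (x j - cA)) : ℝ)) :=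
          Finset.sum_congr rfl fun i _ => Finset.sum_congr rfl fun j _ => key i j
      _ = (∑ i ∈ A, ∑ j ∈ A, w i * (w j * (‖x i - cA‖ ^ 2 + ‖x j - cA‖ ^ 2)))
            - 2 * ∑ i ∈ A, ∑ j ∈ A, (inner ℝ (w i • (x i - cA)) (w j • (x j - cA)) : ℝ) := by
          simp only [Finset.sum_sub_distrib, Finset.mul_sum]
      _ = 2 * W * T := by rw [first, cross]; ring
  -- pointwise bounds
  set M : ι → ℝ := fun i => ∑ j ∈ A, w j * min (D (x j)) ‖x i - x j‖ ^ 2 with hM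
  set N : ι → ℝ := fun i => ∑ j ∈ A, w j * ‖x i - x j‖ ^ 2 with hN
  have hMnn : ∀ i, 0 ≤ M i := fun i =>
    Finset.sum_nonneg fun j hj => mul_nonneg (hw j hj) (sq_nonneg _)
  have hNnn : ∀ i, 0 ≤ N i := fun i =>
    Finset.sum_nonneg fun j hj => mul_nonneg (hw j hj) (sq_nonneg _)
  have hmin0 : ∀ i j : ι, 0 ≤ min (D (x j)) ‖x i - x j‖ := fun i j =>
    le_min (hDnn _) (norm_nonneg _)
  have hMS : ∀ i, M i ≤ S := by
    intro i
    rw [hS]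
    refine Finset.sum_le_sum fun j hj => mul_le_mul_of_nonneg_left ?_ (hw j hj)
    exact pow_le_pow_left₀ (hmin0 i j) (min_le_left _ _) 2
  have hMN : ∀ i, M i ≤ N i := by
    intro i
    refine Finset.sum_le_sum fun j hj => mul_le_mul_of_nonneg_left ?_ (hw j hj)
    exact pow_le_pow_left₀ (hmin0 i j) (min_le_right _ _) 2
  have hWD : ∀ i : ι, W * D (x i) ^ 2 ≤ 2 * S + 2 * N i := by
    intro i
    have h1 : W * D (x i) ^ 2 = ∑ j ∈ A, w j * D (x i) ^ 2 := by
      rw [hW, Finset.sum_mul]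
    rw [h1]
    have h2 : ∑ j ∈ A, w j * D (x i) ^ 2
        ≤ ∑ j ∈ A, (2 * (w j * D (x j) ^ 2) + 2 * (w j * ‖x i - x j‖ ^ 2)) := by
      refine Finset.sum_le_sum fun j hj => ?_
      have := mul_le_mul_of_nonneg_left (hsq i j) (hw j hj)
      nlinarith
    calc ∑ j ∈ A, w j * D (x i) ^ 2
        ≤ ∑ j ∈ A, (2 * (w j * D (x j) ^ 2) + 2 * (w j * ‖x i - x j‖ ^ 2)) := h2
      _ = 2 * S + 2 * N i := by
          rw [Finset.sum_add_distrib, ← Finset.mul_sum, ← Finset.mul_sum, hS]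
  have hkey : ∀ i ∈ A, W * (w i * D (x i) ^ 2 * M i) ≤ 4 * (w i * (S * N i)) := by
    intro i hi
    have h1 := hWD i
    have h2 := hMS i
    have h3 := hMN i
    have h4 := hMnn i
    have h5 := hNnn i
    have h6 := hw i hi
    nlinarith [mul_le_mul_of_nonneg_right h1 (mul_nonneg h6 h4),
      mul_le_mul_of_nonneg_left h3 hSpos.le,
      mul_le_mul_of_nonneg_left h2 h5]
  have hsumN : ∑ i ∈ A, w i * N i = 2 * W * T := by
    rw [← hvar]
    exact Finset.sum_congr rfl fun i _ => by
      rw [hN, Finset.mul_sum]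
      exact Finset.sum_congr rfl fun j _ => by ring
  have hmain : W * ∑ i ∈ A, w i * D (x i) ^ 2 * M i ≤ 8 * S * W * T := by
    calc W * ∑ i ∈ A, w i * D (x i) ^ 2 * M i
        = ∑ i ∈ A, W * (w i * D (x i) ^ 2 * M i) := Finset.mul_sum _ _ _
      _ ≤ ∑ i ∈ A, 4 * (w i * (S * N i)) := Finset.sum_le_sum hkey
      _ = 4 * S * ∑ i ∈ A, w i * N i := by
          rw [Finset.mul_sum]
          exact Finset.sum_congr rfl fun i _ => by ring
      _ = 8 * S * W * T := by rw [hsumN]; ring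
  have hLHS : ∑ i ∈ A, (w i * D (x i) ^ 2 / S) * M i
      = (∑ i ∈ A, w i * D (x i) ^ 2 * M i) / S := by
    rw [Finset.sum_div]
    exact Finset.sum_congr rfl fun i _ => by ring
  have goal2 : ∑ i ∈ A, w i * D (x i) ^ 2 * M i ≤ 8 * T * S := by
    nlinarith [hmain, hWpos]
  calc ∑ i ∈ A, (w i * D (x i) ^ 2 / S) * M i
      = (∑ i ∈ A, w i * D (x i) ^ 2 * M i) / S := hLHS
    _ ≤ 8 * T := by rw [div_le_iff₀ hSpos]; linarith
end

section
/- Under the setting of the coverage discretization (Q partitioned into cells of a grid of mesh ε, density φ ≥ 0 with ∫_Q φ = 1, cell weights w_i and centroids x_i, J_i the cell second moments, D an upper bound on distances between adjacent Voronoi centers), for any set P of k sensor locations: H(P) ≤ Φ(P) + Σ_i J_i ≤ H(P) + 2√2 · D · ε. -/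
open scoped InnerProductSpace


open MeasureTheory Finset

theorem coverage_discretization_bounds {n k : ℕ} (hk : 0 < k)
    (ε Dmax : ℝ) (hε : 0 < ε) (hDmax : 0 ≤ Dmax)
    (Q : Set (EuclideanSpace ℝ (Fin 2))) (hQ : MeasurableSet Q)
    (C : Fin n → Set (EuclideanSpace ℝ (Fin 2)))
    (hCmeas : ∀ i, MeasurableSet (C i))
    (hCdisj : ∀ i l, i ≠ l → C i ∩ C l = ∅)
    (hCunion : (⋃ i, C i) = Q)
    (φ : EuclideanSpace ℝ (Fin 2) → ℝ) (hφ : ∀ q, 0 ≤ φ q)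
    (hφint : IntegrableOn φ Q)
    (hφint₁ : IntegrableOn (fun q => φ q • q) Q)
    (hφnorm : (∫ q in Q, φ q) = 1)
    (p : Fin k → EuclideanSpace ℝ (Fin 2))
    (hint : IntegrableOn
      (fun q => φ q * (Finset.univ.inf' (univ_nonempty_iff.mpr
        ⟨⟨0, hk⟩⟩) fun j => ‖q - p j‖ ^ 2)) Q)
    (w : Fin n → ℝ) (hw : ∀ i, w i = ∫ q in C i, φ q) (hwpos : ∀ i, 0 < w i)
    (x : Fin n → EuclideanSpace ℝ (Fin 2))
    (hx : ∀ i, x i = (w i)⁻¹ • ∫ q in C i, φ q • q)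
    (J : Fin n → ℝ) (hJ : ∀ i, J i = ∫ q in C i, φ q * ‖q - x i‖ ^ 2)
    -- every point of a cell is within √2·ε of the cell centroid (grid of mesh ε)
    (hmesh : ∀ i, ∀ q ∈ C i, ‖q - x i‖ ≤ Real.sqrt 2 * ε)
    -- Dmax bounds the distance between centers whose Voronoi cells meet a common cell
    (hD : ∀ i (a b : Fin k),
      (C i ∩ {q | ∀ l, ‖q - p a‖ ≤ ‖q - p l‖}).Nonempty →
      (C i ∩ {q | ∀ l, ‖q - p b‖ ≤ ‖q - p l‖}).Nonempty →
      ‖p a - p b‖ ≤ Dmax) :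
    (∫ q in Q, φ q * (Finset.univ.inf' (univ_nonempty_iff.mpr
          ⟨⟨0, hk⟩⟩) fun j => ‖q - p j‖ ^ 2))
        ≤ (∑ i, w i * (Finset.univ.inf' (univ_nonempty_iff.mpr
          ⟨⟨0, hk⟩⟩) fun j => ‖x i - p j‖ ^ 2)) + ∑ i, J i
    ∧ (∑ i, w i * (Finset.univ.inf' (univ_nonempty_iff.mpr
          ⟨⟨0, hk⟩⟩) fun j => ‖x i - p j‖ ^ 2)) + ∑ i, J i
        ≤ (∫ q in Q, φ q * (Finset.univ.inf' (univ_nonempty_iff.mpr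
          ⟨⟨0, hk⟩⟩) fun j => ‖q - p j‖ ^ 2)) + 2 * Real.sqrt 2 * Dmax * ε := by
  
  classical
  let G : (EuclideanSpace ℝ (Fin 2)) → ℝ := fun q => Finset.univ.inf' (univ_nonempty_iff.mpr
    ⟨⟨0, hk⟩⟩) fun j => ‖q - p j‖ ^ 2
  let M : Fin n → ℝ := fun i => Finset.univ.inf' (univ_nonempty_iff.mpr
    ⟨⟨0, hk⟩⟩) fun j => ‖x i - p j‖ ^ 2
  suffices h : (∫ q in Q, φ q * G q) ≤ (∑ i, w i * M i) + ∑ i, J i ∧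
      (∑ i, w i * M i) + ∑ i, J i
        ≤ (∫ q in Q, φ q * G q) + 2 * Real.sqrt 2 * Dmax * ε from h
  have hsub : ∀ i, C i ⊆ Q := fun i => hCunion ▸ Set.subset_iUnion C i
  have hdisj : Pairwise (Function.onFun Disjoint C) := fun i l h =>
    Set.disjoint_iff_inter_eq_empty.mpr (hCdisj i l h)
  have hsplit : ∀ (f : (EuclideanSpace ℝ (Fin 2)) → ℝ), IntegrableOn f Q →
      (∫ q in Q, f q) = ∑ i, ∫ q in C i, f q := by
    intro f hf
    rw [← hCunion] at hf ⊢
    rw [integral_iUnion hCmeas hdisj hf, tsum_fintype]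
  have hφi : ∀ i, IntegrableOn φ (C i) := fun i => hφint.mono_set (hsub i)
  have hφiq : ∀ i, IntegrableOn (fun q => φ q • q) (C i) :=
    fun i => hφint₁.mono_set (hsub i)
  have hwsum : ∑ i, w i = 1 := by
    rw [show ∑ i, w i = ∑ i, ∫ q in C i, φ q from Finset.sum_congr rfl
      (fun i _ => hw i), ← hsplit φ hφint, hφnorm]
  -- owner of a point
  have howner : ∀ q : (EuclideanSpace ℝ (Fin 2)), ∃ a : Fin k, (∀ l, ‖q - p a‖ ≤ ‖q - p l‖) ∧
      G q = ‖q - p a‖ ^ 2 := by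
    intro q
    obtain ⟨a, -, ha⟩ := Finset.exists_mem_eq_inf'
      (univ_nonempty_iff.mpr ⟨⟨0, hk⟩⟩) (fun j => ‖q - p j‖ ^ 2)
    refine ⟨a, fun l => ?_, ha⟩
    have h1 : ‖q - p a‖ ^ 2 ≤ ‖q - p l‖ ^ 2 := by
      rw [← ha]; exact Finset.inf'_le _ (Finset.mem_univ l)
    exact (pow_le_pow_iff_left₀ (norm_nonneg _) (norm_nonneg _)
      two_ne_zero).mp h1
  -- integrability of φ * ‖· - c‖² on a cell
  have hint2 : ∀ i (c : (EuclideanSpace ℝ (Fin 2))), IntegrableOn (fun q => φ q * ‖q - c‖ ^ 2) (C i) := by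
    intro i c
    refine Integrable.mono' (((hφi i).const_mul ((Real.sqrt 2 * ε + ‖x i - c‖) ^ 2)))
      (((hφi i).aestronglyMeasurable).mul
        (Continuous.aestronglyMeasurable (by fun_prop))) ?_
    filter_upwards [ae_restrict_mem (hCmeas i)] with q hq
    have h1 : ‖q - c‖ ≤ Real.sqrt 2 * ε + ‖x i - c‖ := by
      calc ‖q - c‖ = ‖(q - x i) + (x i - c)‖ := by rw [sub_add_sub_cancel]
        _ ≤ ‖q - x i‖ + ‖x i - c‖ := norm_add_le _ _
        _ ≤ Real.sqrt 2 * ε + ‖x i - c‖ := by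
            have := hmesh i q hq; linarith
    have h2 : ‖q - c‖ ^ 2 ≤ (Real.sqrt 2 * ε + ‖x i - c‖) ^ 2 :=
      pow_le_pow_left₀ (norm_nonneg _) h1 2
    rw [Real.norm_eq_abs, abs_of_nonneg (mul_nonneg (hφ q) (sq_nonneg _))]
    exact (mul_le_mul_of_nonneg_left h2 (hφ q)).trans_eq (mul_comm _ _)
  -- integrability of the vector moment
  have hmomint : ∀ i, IntegrableOn (fun q => φ q • (x i - q)) (C i) := by
    intro i
    have h1 := ((hφi i).smul_const (x i)).sub (hφiq i)
    simp only [smul_sub]; exact h1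
  -- the centroid moment vanishes
  have hmom : ∀ i, (∫ q in C i, φ q • (x i - q)) = (0 : (EuclideanSpace ℝ (Fin 2))) := by
    intro i
    have h1 : (∫ q in C i, φ q • (x i - q))
        = (∫ q in C i, φ q) • x i - ∫ q in C i, φ q • q := by
      rw [← integral_smul_const, ← integral_sub ((hφi i).smul_const (x i)) (hφiq i)]
      simp [smul_sub]
    rw [h1, ← hw i, hx i, smul_inv_smul₀ (ne_of_gt (hwpos i)), sub_self]
  -- expansion identity
  have hexp : ∀ i (c : (EuclideanSpace ℝ (Fin 2))), (∫ q in C i, φ q * ‖q - c‖ ^ 2)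
      = (∫ q in C i, φ q * ‖q - x i‖ ^ 2) + w i * ‖x i - c‖ ^ 2 := by
    intro i c
    have hpt : ∀ q : (EuclideanSpace ℝ (Fin 2)), φ q * ‖q - c‖ ^ 2 = φ q * ‖q - x i‖ ^ 2
        + ⟪(-2 : ℝ) • (x i - c), φ q • (x i - q)⟫_ℝ + ‖x i - c‖ ^ 2 * φ q := by
      intro q
      have e1 : q - c = (q - x i) + (x i - c) := (sub_add_sub_cancel q (x i) c).symm
      rw [e1, norm_add_sq_real, real_inner_smul_left, real_inner_smul_right]
      have e2 : ⟪x i - c, x i - q⟫_ℝ = -⟪q - x i, x i - c⟫_ℝ := by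
        rw [show x i - q = -(q - x i) by abel, inner_neg_right, real_inner_comm]
      rw [e2]; ring
    simp_rw [hpt]
    have iC : IntegrableOn
        (fun q => ⟪(-2 : ℝ) • (x i - c), φ q • (x i - q)⟫_ℝ) (C i) :=
      (hmomint i).const_inner _
    have iA : IntegrableOn (fun q => φ q * ‖q - x i‖ ^ 2
        + ⟪(-2 : ℝ) • (x i - c), φ q • (x i - q)⟫_ℝ) (C i) := by
      exact (hint2 i (x i)).add iC
    rw [integral_add iA ((hφi i).const_mul _),
      integral_add (hint2 i (x i)) iC,
      integral_inner (hmomint i), hmom i, inner_zero_right, integral_const_mul,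
      ← hw i]
    ring
  have hGint : ∀ i, IntegrableOn (fun q => φ q * G q) (C i) :=
    fun i => hint.mono_set (hsub i)
  -- first inequality, per cell
  have h1 : ∀ i, (∫ q in C i, φ q * G q) ≤ w i * M i + J i := by
    intro i
    obtain ⟨b, -, hb⟩ := Finset.exists_mem_eq_inf'
      (univ_nonempty_iff.mpr ⟨⟨0, hk⟩⟩) (fun j => ‖x i - p j‖ ^ 2)
    have hle : (∫ q in C i, φ q * G q) ≤ ∫ q in C i, φ q * ‖q - p b‖ ^ 2 := by
      refine setIntegral_mono_on (hGint i) (hint2 i (p b)) (hCmeas i) ?_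
      intro q hq
      exact mul_le_mul_of_nonneg_left (Finset.inf'_le _ (Finset.mem_univ b)) (hφ q)
    rw [hexp i (p b)] at hle
    have hMi : M i = ‖x i - p b‖ ^ 2 := hb
    rw [hJ i, hMi]
    linarith
  -- second inequality, per cell
  have h2 : ∀ i, w i * M i + J i
      ≤ (∫ q in C i, φ q * G q) + 2 * Real.sqrt 2 * Dmax * ε * w i := by
    intro i
    have hne : (C i).Nonempty := by
      by_contra h
      rw [Set.not_nonempty_iff_eq_empty] at h
      have h0 := hw i
      rw [h] at h0
      simp at h0
      exact absurd h0 (ne_of_gt (hwpos i))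
    obtain ⟨q₀, hq₀⟩ := hne
    obtain ⟨a₀, ha₀, -⟩ := howner q₀
    -- pointwise bound on C i
    have hpt : ∀ q ∈ C i, φ q * (M i + ‖q - x i‖ ^ 2) ≤ φ q * G q
        + ⟪(2 : ℝ) • (x i - p a₀), φ q • (x i - q)⟫_ℝ
        + (2 * Real.sqrt 2 * Dmax * ε) * φ q := by
      intro q hq
      obtain ⟨a, ha, hga⟩ := howner q
      have hMa : M i ≤ ‖x i - p a‖ ^ 2 := Finset.inf'_le _ (Finset.mem_univ a)
      have key : ‖x i - p a‖ ^ 2 + ‖q - x i‖ ^ 2 ≤ ‖q - p a‖ ^ 2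
          + 2 * ⟪x i - p a₀, x i - q⟫_ℝ + 2 * Real.sqrt 2 * Dmax * ε := by
        have e2 : ‖x i - p a‖ ^ 2 = ‖x i - q‖ ^ 2
            + 2 * ⟪x i - q, q - p a⟫_ℝ + ‖q - p a‖ ^ 2 := by
          rw [show x i - p a = (x i - q) + (q - p a) from
            (sub_add_sub_cancel _ _ _).symm, norm_add_sq_real]
        have e3 : ⟪x i - q, q - p a⟫_ℝ = -‖x i - q‖ ^ 2
            + ⟪x i - p a₀, x i - q⟫_ℝ + ⟪x i - q, p a₀ - p a⟫_ℝ := by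
          rw [show q - p a = (q - x i) + ((x i - p a₀) + (p a₀ - p a)) by abel,
            inner_add_right, inner_add_right,
            show q - x i = -(x i - q) by abel, inner_neg_right,
            real_inner_self_eq_norm_sq, real_inner_comm (x i - q) (x i - p a₀)]
          ring
        have e4 : ⟪x i - q, p a₀ - p a⟫_ℝ ≤ Real.sqrt 2 * ε * Dmax := by
          calc ⟪x i - q, p a₀ - p a⟫_ℝ ≤ ‖x i - q‖ * ‖p a₀ - p a‖ :=
              real_inner_le_norm _ _
            _ ≤ (Real.sqrt 2 * ε) * Dmax := by
                refine mul_le_mul ?_ (hD i a₀ a ⟨q₀, hq₀, ha₀⟩ ⟨q, hq, ha⟩)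
                  (norm_nonneg _) (by positivity)
                rw [norm_sub_rev]; exact hmesh i q hq
        have hns : ‖x i - q‖ ^ 2 = ‖q - x i‖ ^ 2 := by rw [norm_sub_rev]
        linarith
      have key2 : M i + ‖q - x i‖ ^ 2 ≤ G q
          + 2 * ⟪x i - p a₀, x i - q⟫_ℝ + 2 * Real.sqrt 2 * Dmax * ε := by
        rw [hga]; linarith
      have hmul := mul_le_mul_of_nonneg_left key2 (hφ q)
      rw [real_inner_smul_left, real_inner_smul_right]
      nlinarith [hφ q]
    -- integrate the pointwise bound
    have iL : IntegrableOn (fun q => φ q * (M i + ‖q - x i‖ ^ 2)) (C i) := by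
      have e : (fun q : (EuclideanSpace ℝ (Fin 2)) => φ q * (M i + ‖q - x i‖ ^ 2))
          = fun q => φ q * M i + φ q * ‖q - x i‖ ^ 2 := funext fun q => by ring
      rw [e]; exact ((hφi i).mul_const _).add (hint2 i (x i))
    have iR2 : IntegrableOn
        (fun q => ⟪(2 : ℝ) • (x i - p a₀), φ q • (x i - q)⟫_ℝ) (C i) :=
      (hmomint i).const_inner _
    have iR3 : IntegrableOn (fun q => (2 * Real.sqrt 2 * Dmax * ε) * φ q) (C i) :=
      (hφi i).const_mul _
    have iRa : IntegrableOn (fun q => φ q * G q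
        + ⟪(2 : ℝ) • (x i - p a₀), φ q • (x i - q)⟫_ℝ) (C i) := by
      exact (hGint i).add iR2
    have iR : IntegrableOn (fun q => φ q * G q
        + ⟪(2 : ℝ) • (x i - p a₀), φ q • (x i - q)⟫_ℝ
        + (2 * Real.sqrt 2 * Dmax * ε) * φ q) (C i) := by
      exact iRa.add iR3
    have hle := setIntegral_mono_on iL iR (hCmeas i) hpt
    have eL : (∫ q in C i, φ q * (M i + ‖q - x i‖ ^ 2)) = w i * M i + J i := by
      simp_rw [mul_add]
      rw [integral_add ((hφi i).mul_const _) (hint2 i (x i)), integral_mul_const,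
        ← hw i, ← hJ i]
    have eR : (∫ q in C i, (φ q * G q
          + ⟪(2 : ℝ) • (x i - p a₀), φ q • (x i - q)⟫_ℝ
          + (2 * Real.sqrt 2 * Dmax * ε) * φ q))
        = (∫ q in C i, φ q * G q) + 2 * Real.sqrt 2 * Dmax * ε * w i := by
      rw [integral_add iRa iR3, integral_add (hGint i) iR2,
        integral_inner (hmomint i), hmom i, inner_zero_right, integral_const_mul,
        ← hw i]
      ring
    rw [eL, eR] at hle
    exact hle
  constructor
  · rw [hsplit _ hint]
    calc (∑ i, ∫ q in C i, φ q * G q) ≤ ∑ i, (w i * M i + J i) :=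
        Finset.sum_le_sum fun i _ => h1 i
      _ = (∑ i, w i * M i) + ∑ i, J i := Finset.sum_add_distrib
  · have hsum := Finset.sum_le_sum fun i (_ : i ∈ Finset.univ) => h2 i
    rw [Finset.sum_add_distrib, Finset.sum_add_distrib, ← Finset.mul_sum,
      hwsum, mul_one, ← hsplit _ hint] at hsum
    exact hsum
end

section
/- Let X = {x₁,...,x_n} ⊆ ℝ^d with weights w_i ≥ 0 and let Φ_OPT be the minimum over all k-point sets P of Φ(P) = Σ_i w_i min_{p∈P} ‖x_i - p‖². If P is chosen by weighted-D² sampling (first center chosen with probability ∝ w_i; each subsequent center chosen with probability ∝ w_i·D(x_i)² where D is the distance to the already-chosen centers), then E[Φ(P)] ≤ 8(ln k + 2)·Φ_OPT. -/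
open Finset

/-- Distance from a point `q` to the set of already-chosen centers `{x j : j ∈ S}`. -/
noncomputable def distToCenters {d : ℕ} {ι : Type*} [DecidableEq ι]
    (x : ι → EuclideanSpace ℝ (Fin d)) (S : Finset ι)
    (q : EuclideanSpace ℝ (Fin d)) : ℝ :=
  if h : S.Nonempty then S.inf' h (fun j => ‖q - x j‖) else 0

/-- Weighted k-means cost of the point set `X` against an arbitrary finite center set `P`. -/
noncomputable def kmeansCost {d : ℕ} {ι : Type*}
    (X : Finset ι) (x : ι → EuclideanSpace ℝ (Fin d)) (w : ι → ℝ)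
    (P : Finset (EuclideanSpace ℝ (Fin d))) : ℝ :=
  ∑ i ∈ X, w i * (if h : P.Nonempty then P.inf' h (fun p => ‖x i - p‖) else 0) ^ 2

/-- Weighted k-means cost of `X` against the centers indexed by `S ⊆ X`. -/
noncomputable def costIdx {d : ℕ} {ι : Type*} [DecidableEq ι]
    (X : Finset ι) (x : ι → EuclideanSpace ℝ (Fin d)) (w : ι → ℝ)
    (S : Finset ι) : ℝ :=
  ∑ i ∈ X, w i * (distToCenters x S (x i)) ^ 2

/-- Expected final cost of weighted-D² sampling: starting from the chosen
centers `S`, `t` further centers are drawn, each with probability proportional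
to `w i · D(x i)²`. -/
noncomputable def expCostD2 {d : ℕ} {ι : Type*} [DecidableEq ι]
    (X : Finset ι) (x : ι → EuclideanSpace ℝ (Fin d)) (w : ι → ℝ) :
    Finset ι → ℕ → ℝ
  | S, 0 => costIdx X x w S
  | S, (t + 1) => ∑ i ∈ X,
      (w i * (distToCenters x S (x i)) ^ 2 /
        ∑ j ∈ X, w j * (distToCenters x S (x j)) ^ 2) *
      expCostD2 X x w (insert i S) t

section Basic
variable {d : ℕ} {ι : Type*} [DecidableEq ι] (x : ι → EuclideanSpace ℝ (Fin d))

lemma dtc_nonneg (S : Finset ι) (q : EuclideanSpace ℝ (Fin d)) : 0 ≤ distToCenters x S q := by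
  unfold distToCenters
  split
  · exact Finset.le_inf' _ _ (fun j _ => norm_nonneg _)
  · exact le_refl _

lemma dtc_singleton (j : ι) (q : EuclideanSpace ℝ (Fin d)) :
    distToCenters x {j} q = ‖q - x j‖ := by
  simp [distToCenters]

lemma dtc_insert {S : Finset ι} (hS : S.Nonempty) (j : ι) (q : EuclideanSpace ℝ (Fin d)) :
    distToCenters x (insert j S) q = min ‖q - x j‖ (distToCenters x S q) := by
  simp [distToCenters, hS, Finset.insert_nonempty, Finset.inf'_insert, min_def]

lemma dtc_insert_le {S : Finset ι} (hS : S.Nonempty) (j : ι) (q : EuclideanSpace ℝ (Fin d)) :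
    distToCenters x (insert j S) q ≤ distToCenters x S q := by
  rw [dtc_insert x hS]; exact min_le_right _ _

lemma dtc_insert_le_norm (S : Finset ι) (j : ι) (q : EuclideanSpace ℝ (Fin d)) :
    distToCenters x (insert j S) q ≤ ‖q - x j‖ := by
  unfold distToCenters
  rw [dif_pos (Finset.insert_nonempty _ _)]
  exact Finset.inf'_le _ (Finset.mem_insert_self _ _)

lemma dtc_triangle {S : Finset ι} (hS : S.Nonempty) (p q : EuclideanSpace ℝ (Fin d)) :
    distToCenters x S p ≤ ‖p - q‖ + distToCenters x S q := by
  obtain ⟨j, hj, hje⟩ := Finset.exists_mem_eq_inf' hS (fun j => ‖q - x j‖)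
  unfold distToCenters
  rw [dif_pos hS, dif_pos hS, hje]
  calc S.inf' hS (fun j => ‖p - x j‖) ≤ ‖p - x j‖ := Finset.inf'_le _ hj
    _ ≤ ‖p - q‖ + ‖q - x j‖ := norm_sub_le_norm_sub_add_norm_sub p q (x j)

end Basic

noncomputable def wcent {d : ℕ} {ι : Type*} (x : ι → EuclideanSpace ℝ (Fin d))
    (w : ι → ℝ) (A : Finset ι) : EuclideanSpace ℝ (Fin d) :=
  (∑ i ∈ A, w i)⁻¹ • ∑ i ∈ A, w i • x i

noncomputable def phiStar {d : ℕ} {ι : Type*} (x : ι → EuclideanSpace ℝ (Fin d))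
    (w : ι → ℝ) (A : Finset ι) : ℝ :=
  ∑ i ∈ A, w i * ‖x i - wcent x w A‖ ^ 2

section Centroid
open RealInnerProductSpace
variable {d : ℕ} {ι : Type*} (x : ι → EuclideanSpace ℝ (Fin d)) (w : ι → ℝ) (A : Finset ι)

lemma phiStar_nonneg (hw : ∀ i ∈ A, 0 ≤ w i) : 0 ≤ phiStar x w A :=
  Finset.sum_nonneg fun i hi => mul_nonneg (hw i hi) (by positivity)

lemma sum_w_smul_sub (hW : (∑ i ∈ A, w i) ≠ 0) :
    ∑ i ∈ A, w i • (x i - wcent x w A) = 0 := by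
  have h : ∑ i ∈ A, w i • (x i - wcent x w A)
      = (∑ i ∈ A, w i • x i) - (∑ i ∈ A, w i) • wcent x w A := by
    rw [Finset.sum_smul]
    simp [smul_sub, Finset.sum_sub_distrib]
  rw [h, wcent, smul_smul, mul_inv_cancel₀ hW, one_smul, sub_self]

lemma inner_sum_zero (hW : (∑ i ∈ A, w i) ≠ 0) (y : EuclideanSpace ℝ (Fin d)) :
    ∑ j ∈ A, w j * ⟪x j - wcent x w A, y⟫ = 0 := by
  have : ∑ j ∈ A, w j * ⟪x j - wcent x w A, y⟫
      = ⟪∑ j ∈ A, w j • (x j - wcent x w A), y⟫ := by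
    rw [sum_inner]
    exact Finset.sum_congr rfl fun j _ => (real_inner_smul_left _ _ _).symm
  rw [this, sum_w_smul_sub x w A hW, inner_zero_left]

lemma inner_sum_expand (a : ι) (hW : (∑ i ∈ A, w i) ≠ 0) :
    ∑ j ∈ A, w j * ‖x j - x a‖ ^ 2
      = phiStar x w A + (∑ j ∈ A, w j) * ‖x a - wcent x w A‖ ^ 2 := by
  set c := wcent x w A with hc
  have key : ∀ j ∈ A, w j * ‖x j - x a‖ ^ 2
      = w j * ‖x j - c‖ ^ 2 - 2 * (w j * ⟪x j - c, x a - c⟫) + w j * ‖x a - c‖ ^ 2 := by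
    intro j _
    have h : x j - x a = (x j - c) - (x a - c) := by abel
    rw [h, norm_sub_sq_real]; ring
  rw [Finset.sum_congr rfl key, Finset.sum_add_distrib, Finset.sum_sub_distrib,
    ← Finset.mul_sum, inner_sum_zero x w A hW, mul_zero, sub_zero, ← Finset.sum_mul]
  rfl

/-- The magic identity: pairwise weighted distances vs centroid cost. -/
lemma pairwise_identity (hw : ∀ i ∈ A, 0 ≤ w i) :
    ∑ a ∈ A, w a * ∑ j ∈ A, w j * ‖x j - x a‖ ^ 2
      = 2 * (∑ i ∈ A, w i) * phiStar x w A := by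
  by_cases hW : (∑ i ∈ A, w i) = 0
  · have hz : ∀ i ∈ A, w i = 0 := (Finset.sum_eq_zero_iff_of_nonneg hw).1 hW
    rw [hW, Finset.sum_congr rfl (fun a ha => by rw [hz a ha, zero_mul])]
    simp
  · rw [Finset.sum_congr rfl (fun a (_ : a ∈ A) => by rw [inner_sum_expand x w A a hW])]
    simp only [mul_add, Finset.sum_add_distrib, ← Finset.sum_mul, ← mul_assoc]
    rw [show ∑ a ∈ A, w a * (∑ j ∈ A, w j) * ‖x a - wcent x w A‖ ^ 2
        = (∑ j ∈ A, w j) * phiStar x w A from ?_]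
    · ring
    · rw [phiStar, Finset.mul_sum]
      exact Finset.sum_congr rfl fun a _ => by ring

/-- Bias-variance: the centroid is the best single center. -/
lemma phiStar_le (hw : ∀ i ∈ A, 0 ≤ w i) (z : EuclideanSpace ℝ (Fin d)) :
    phiStar x w A ≤ ∑ i ∈ A, w i * ‖x i - z‖ ^ 2 := by
  by_cases hW : (∑ i ∈ A, w i) = 0
  · have hz : ∀ i ∈ A, w i = 0 := (Finset.sum_eq_zero_iff_of_nonneg hw).1 hW
    have h1 : phiStar x w A = 0 :=
      Finset.sum_eq_zero fun i hi => by rw [hz i hi, zero_mul]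
    have h2 : ∑ i ∈ A, w i * ‖x i - z‖ ^ 2 = 0 :=
      Finset.sum_eq_zero fun i hi => by rw [hz i hi, zero_mul]
    rw [h1, h2]
  · set c := wcent x w A with hc
    have key : ∀ i ∈ A, w i * ‖x i - z‖ ^ 2
        = w i * ‖x i - c‖ ^ 2 + 2 * (w i * ⟪x i - c, c - z⟫) + w i * ‖c - z‖ ^ 2 := by
      intro i _
      have h : x i - z = (x i - c) + (c - z) := by abel
      rw [h, norm_add_sq_real]; ring
    rw [Finset.sum_congr rfl key, Finset.sum_add_distrib, Finset.sum_add_distrib,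
      ← Finset.mul_sum, inner_sum_zero x w A hW, mul_zero, add_zero, ← Finset.sum_mul]
    have : 0 ≤ (∑ i ∈ A, w i) * ‖c - z‖ ^ 2 := by
      have := Finset.sum_nonneg hw
      positivity
    rw [phiStar]
    linarith

end Centroid

noncomputable def Hsum (t : ℕ) : ℝ := ∑ s ∈ Finset.range t, (1:ℝ)/(s+1)

lemma Hsum_nonneg (t : ℕ) : 0 ≤ Hsum t :=
  Finset.sum_nonneg fun s _ => by positivity

lemma Hsum_succ (t : ℕ) : Hsum (t+1) = Hsum t + 1/(t+1) := Finset.sum_range_succ _ _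

lemma Hsum_le : ∀ n : ℕ, 1 ≤ n → Hsum n ≤ 1 + Real.log n := by
  intro n
  induction n with
  | zero => intro h; omega
  | succ m ih =>
    intro _
    rcases Nat.eq_zero_or_pos m with hm | hm
    · subst hm
      simp [Hsum]
    · have h1 : Hsum m ≤ 1 + Real.log m := ih hm
      have hmpos : (0:ℝ) < m := by exact_mod_cast hm
      have hm1pos : (0:ℝ) < (m:ℝ) + 1 := by linarith
      have hlog : Real.log ((m:ℝ)/((m:ℝ)+1)) ≤ (m:ℝ)/((m:ℝ)+1) - 1 :=
        Real.log_le_sub_one_of_pos (by positivity)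
      have hlogq : Real.log ((m:ℝ)/((m:ℝ)+1)) = Real.log m - Real.log ((m:ℝ)+1) :=
        Real.log_div (ne_of_gt hmpos) (ne_of_gt hm1pos)
      have hfrac : (m:ℝ)/((m:ℝ)+1) - 1 = -(1/((m:ℝ)+1)) := by field_simp; ring
      have key : 1/((m:ℝ)+1) ≤ Real.log ((m:ℝ)+1) - Real.log m := by
        rw [hlogq, hfrac] at hlog; linarith
      rw [Hsum_succ]
      push_cast
      linarith

lemma Hsum_pred_le (k : ℕ) (hk : 1 ≤ k) : Hsum (k-1) ≤ 1 + Real.log k := by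
  rcases Nat.lt_or_ge k 2 with h | h
  · interval_cases k
    have : Real.log 1 = 0 := Real.log_one
    simp [Hsum]
  · have h1 : 1 ≤ k - 1 := by omega
    have h2 := Hsum_le (k-1) h1
    have hx : (0:ℝ) < ((k-1 : ℕ):ℝ) := by exact_mod_cast Nat.lt_of_lt_of_le Nat.zero_lt_one h1
    have h3 : Real.log ((k-1 : ℕ):ℝ) ≤ Real.log k := by
      apply Real.log_le_log hx
      exact_mod_cast Nat.sub_le k 1
    linarith


section C
variable {d : ℕ} {ι : Type*} [DecidableEq ι] (x : ι → EuclideanSpace ℝ (Fin d)) (w : ι → ℝ)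
  (A : Finset ι)

/-- Lemma C': unnormalized D²-sampling bound for a cluster. -/
lemma lemmaC (hw : ∀ i ∈ A, 0 ≤ w i) {S : Finset ι} (hS : S.Nonempty) :
    ∑ a ∈ A, (w a * distToCenters x S (x a) ^ 2) *
        (∑ j ∈ A, w j * (min (distToCenters x S (x j)) ‖x j - x a‖) ^ 2)
      ≤ 8 * phiStar x w A * ∑ a ∈ A, w a * distToCenters x S (x a) ^ 2 := by
  set D : ι → ℝ := fun i => distToCenters x S (x i) with hD
  have hDn : ∀ i, 0 ≤ D i := fun i => dtc_nonneg x S (x i)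
  set W : ℝ := ∑ i ∈ A, w i with hW
  set Φ : ℝ := ∑ a ∈ A, w a * D a ^ 2 with hΦ
  set N : ι → ℝ := fun a => ∑ j ∈ A, w j * ‖x j - x a‖ ^ 2 with hN
  set T : ι → ℝ := fun a => ∑ j ∈ A, w j * (min (D j) ‖x j - x a‖) ^ 2 with hT
  have hΦn : 0 ≤ Φ := Finset.sum_nonneg fun a ha => mul_nonneg (hw a ha) (by positivity)
  have hNn : ∀ a, 0 ≤ N a := fun a =>
    Finset.sum_nonneg fun j hj => mul_nonneg (hw j hj) (by positivity)
  have hTn : ∀ a, 0 ≤ T a := fun a =>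
    Finset.sum_nonneg fun j hj => mul_nonneg (hw j hj) (by positivity)
  have hTN : ∀ a, T a ≤ N a := by
    intro a
    apply Finset.sum_le_sum
    intro j hj
    apply mul_le_mul_of_nonneg_left _ (hw j hj)
    apply pow_le_pow_left₀ (le_min (hDn j) (norm_nonneg _)) (min_le_right _ _)
  have hTΦ : ∀ a, T a ≤ Φ := by
    intro a
    apply Finset.sum_le_sum
    intro j hj
    apply mul_le_mul_of_nonneg_left _ (hw j hj)
    apply pow_le_pow_left₀ (le_min (hDn j) (norm_nonneg _)) (min_le_left _ _)
  have hpt : ∀ a ∈ A, W * D a ^ 2 ≤ 2 * Φ + 2 * N a := by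
    intro a _
    have expand : W * D a ^ 2 = ∑ j ∈ A, w j * D a ^ 2 := by rw [hW, Finset.sum_mul]
    rw [expand, hΦ, hN]
    have h2 : 2 * (∑ a ∈ A, w a * D a ^ 2) + 2 * ∑ j ∈ A, w j * ‖x j - x a‖ ^ 2
        = ∑ j ∈ A, w j * (2 * D j ^ 2 + 2 * ‖x j - x a‖ ^ 2) := by
      rw [Finset.mul_sum, Finset.mul_sum, ← Finset.sum_add_distrib]
      exact Finset.sum_congr rfl fun j _ => by ring
    rw [h2]
    apply Finset.sum_le_sum
    intro j hj
    apply mul_le_mul_of_nonneg_left _ (hw j hj)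
    have tri : D a ≤ ‖x j - x a‖ + D j := by
      have := dtc_triangle x hS (x a) (x j)
      rwa [norm_sub_rev (x a) (x j)] at this
    nlinarith [hDn a, hDn j, norm_nonneg (x j - x a), sq_nonneg (D j - ‖x j - x a‖)]
  have main : W * (∑ a ∈ A, (w a * D a ^ 2) * T a) ≤ 8 * W * (phiStar x w A * Φ) := by
    calc W * (∑ a ∈ A, (w a * D a ^ 2) * T a)
        = ∑ a ∈ A, (w a * (W * D a ^ 2)) * T a := by
          rw [Finset.mul_sum]; exact Finset.sum_congr rfl fun a _ => by ring
      _ ≤ ∑ a ∈ A, (w a * (2 * Φ + 2 * N a)) * T a := by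
          apply Finset.sum_le_sum
          intro a ha
          apply mul_le_mul_of_nonneg_right _ (hTn a)
          exact mul_le_mul_of_nonneg_left (hpt a ha) (hw a ha)
      _ ≤ ∑ a ∈ A, 4 * Φ * (w a * N a) := by
          apply Finset.sum_le_sum
          intro a ha
          have e1 : (w a * (2 * Φ + 2 * N a)) * T a
              = 2 * (w a * Φ) * T a + 2 * (w a * N a) * T a := by ring
          have hwa := hw a ha
          have b1 : 2 * (w a * Φ) * T a ≤ 2 * (w a * Φ) * N a :=
            mul_le_mul_of_nonneg_left (hTN a) (by positivity)
          have b2 : 2 * (w a * N a) * T a ≤ 2 * (w a * N a) * Φ :=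
            mul_le_mul_of_nonneg_left (hTΦ a) (by have := hNn a; positivity)
          calc (w a * (2 * Φ + 2 * N a)) * T a
              = 2 * (w a * Φ) * T a + 2 * (w a * N a) * T a := e1
            _ ≤ 2 * (w a * Φ) * N a + 2 * (w a * N a) * Φ := add_le_add b1 b2
            _ = 4 * Φ * (w a * N a) := by ring
      _ = 4 * Φ * ∑ a ∈ A, w a * N a := (Finset.mul_sum _ _ _).symm
      _ = 4 * Φ * (2 * W * phiStar x w A) := by rw [← pairwise_identity x w A hw]
      _ = 8 * W * (phiStar x w A * Φ) := by ring
  rcases eq_or_lt_of_le (Finset.sum_nonneg hw : (0:ℝ) ≤ W) with hW0 | hWpos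
  · have hz : ∀ i ∈ A, w i = 0 := (Finset.sum_eq_zero_iff_of_nonneg hw).1 hW0.symm
    have l0 : ∑ a ∈ A, (w a * D a ^ 2) * T a = 0 :=
      Finset.sum_eq_zero fun a ha => by rw [hz a ha]; ring
    have Φ0 : Φ = 0 := Finset.sum_eq_zero fun a ha => by rw [hz a ha]; ring
    rw [l0, Φ0, mul_zero]
  · have := main
    have h8 : 8 * W * (phiStar x w A * Φ) = W * (8 * phiStar x w A * Φ) := by ring
    rw [h8] at this
    exact le_of_mul_le_mul_left this hWpos

end C

section KeyLemma
variable {d : ℕ} {ι : Type*} [DecidableEq ι]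

set_option maxHeartbeats 2000000 in
theorem keyInduction (X : Finset ι) (x : ι → EuclideanSpace ℝ (Fin d)) (w : ι → ℝ)
    (hw : ∀ i ∈ X, 0 ≤ w i)
    {κ : Type*} [DecidableEq κ] (f : ι → κ) (φ : κ → ℝ) (hφ : ∀ q, 0 ≤ φ q)
    (hC : ∀ (q : κ) (S : Finset ι), S.Nonempty →
      ∑ a ∈ X.filter (fun i => f i = q), (w a * distToCenters x S (x a) ^ 2) *
        (∑ j ∈ X.filter (fun i => f i = q),
          w j * (min (distToCenters x S (x j)) ‖x j - x a‖) ^ 2)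
      ≤ 8 * φ q * ∑ a ∈ X.filter (fun i => f i = q), w a * distToCenters x S (x a) ^ 2) :
    ∀ (t : ℕ) (U : Finset κ) (S : Finset ι), S.Nonempty → t ≤ U.card →
      expCostD2 X x w S t ≤
        ((∑ i ∈ X.filter (fun i => f i ∉ U), w i * distToCenters x S (x i) ^ 2)
            + 8 * ∑ q ∈ U, φ q) * (1 + Hsum t)
        + (((U.card : ℝ) - t) / U.card) *
            ∑ i ∈ X.filter (fun i => f i ∈ U), w i * distToCenters x S (x i) ^ 2 := by
  intro t
  induction t with
  | zero =>
    intro U S hS htU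
    have hsplit : (∑ i ∈ X.filter (fun i => f i ∈ U), w i * distToCenters x S (x i) ^ 2)
        + (∑ i ∈ X.filter (fun i => f i ∉ U), w i * distToCenters x S (x i) ^ 2)
        = ∑ i ∈ X, w i * distToCenters x S (x i) ^ 2 :=
      Finset.sum_filter_add_sum_filter_not X _ _
    have hΦu : 0 ≤ ∑ i ∈ X.filter (fun i => f i ∈ U), w i * distToCenters x S (x i) ^ 2 :=
      Finset.sum_nonneg fun i hi =>
        mul_nonneg (hw i (Finset.mem_filter.1 hi).1) (by positivity)
    have hφU : 0 ≤ ∑ q ∈ U, φ q := Finset.sum_nonneg fun q _ => hφ q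
    show costIdx X x w S ≤ _
    rw [costIdx, ← hsplit]
    simp only [Hsum, Finset.range_zero, Finset.sum_empty, Nat.cast_zero, sub_zero]
    rcases Finset.eq_empty_or_nonempty U with hU | hU
    · subst hU
      simp only [Finset.notMem_empty, Finset.filter_false, Finset.sum_empty] at hΦu ⊢
      simp only [Finset.filter_true, Finset.card_empty, Nat.cast_zero]
      norm_num
    · have hc : (0:ℝ) < U.card := by exact_mod_cast Finset.card_pos.2 hU
      rw [div_self (ne_of_gt hc)]
      nlinarith [hΦu, hφU]
  | succ t ih =>
    intro U S hS htU
    -- abbreviations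
    set D : Finset ι → ι → ℝ := fun S' i => distToCenters x S' (x i) with hDdef
    set Z : ℝ := ∑ j ∈ X, w j * D S j ^ 2 with hZdef
    set Φc : ℝ := ∑ i ∈ X.filter (fun i => f i ∉ U), w i * D S i ^ 2 with hΦcdef
    set Φu : ℝ := ∑ i ∈ X.filter (fun i => f i ∈ U), w i * D S i ^ 2 with hΦudef
    set φU : ℝ := ∑ q ∈ U, φ q with hφUdef
    have hDn : ∀ S' i, 0 ≤ D S' i := fun S' i => dtc_nonneg x S' (x i)
    have hwn : ∀ i ∈ X, ∀ S', (0:ℝ) ≤ w i * D S' i ^ 2 := fun i hi S' =>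
      mul_nonneg (hw i hi) (by positivity)
    have hsplit : Φu + Φc = Z := Finset.sum_filter_add_sum_filter_not X _ _
    have hΦcn : 0 ≤ Φc := Finset.sum_nonneg fun i hi => hwn i (Finset.mem_filter.1 hi).1 S
    have hΦun : 0 ≤ Φu := Finset.sum_nonneg fun i hi => hwn i (Finset.mem_filter.1 hi).1 S
    have hZn : 0 ≤ Z := Finset.sum_nonneg fun i hi => hwn i hi S
    have hφUn : 0 ≤ φU := Finset.sum_nonneg fun q _ => hφ q
    have hHn : 0 ≤ Hsum t := Hsum_nonneg t
    have hucard : 1 ≤ U.card := le_trans (Nat.one_le_iff_ne_zero.2 (by omega)) htU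
    have hupos : (0:ℝ) < U.card := by exact_mod_cast Nat.lt_of_lt_of_le Nat.zero_lt_one hucard
    have htu : (t:ℝ) + 1 ≤ (U.card:ℝ) := by exact_mod_cast htU
    show (∑ i ∈ X, (w i * D S i ^ 2 / Z) * expCostD2 X x w (insert i S) t) ≤ _
    rcases eq_or_lt_of_le hZn with hZ0 | hZpos
    · -- total potential zero: expected cost is 0
      have hzero : ∀ i ∈ X, (w i * D S i ^ 2 / Z) * expCostD2 X x w (insert i S) t = 0 := by
        intro i _
        rw [← hZ0, div_zero, zero_mul]
      rw [Finset.sum_eq_zero hzero]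
      have h1 : 0 ≤ ((U.card:ℝ) - (t+1)) / U.card := by
        apply div_nonneg _ (le_of_lt hupos)
        push_cast
        linarith
      have h2 : 0 ≤ 1 + Hsum (t+1) := by have := Hsum_nonneg (t+1); linarith
      push_cast
      nlinarith [mul_nonneg (add_nonneg hΦcn (by linarith : (0:ℝ) ≤ 8 * φU)) h2,
        mul_nonneg h1 hΦun]
    · -- main case
      set E : ι → ℝ := fun i => expCostD2 X x w (insert i S) t with hEdef
      have hpn : ∀ i ∈ X, 0 ≤ w i * D S i ^ 2 / Z :=
        fun i hi => div_nonneg (hwn i hi S) hZn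
      have hmono : ∀ (a : ι) (A' : Finset ι),
          (∑ i ∈ A', w i * D (insert a S) i ^ 2) ≤ ∑ i ∈ A', w i * D S i ^ 2 → True := fun _ _ _ => trivial
      -- monotonicity of cluster costs under inserting a center
      have monoS : ∀ (a : ι) (A' : Finset ι), A' ⊆ X →
          (∑ i ∈ A', w i * D (insert a S) i ^ 2) ≤ ∑ i ∈ A', w i * D S i ^ 2 := by
        intro a A' hA'
        apply Finset.sum_le_sum
        intro j hj
        apply mul_le_mul_of_nonneg_left _ (hw j (hA' hj))
        exact pow_le_pow_left₀ (hDn _ _) (dtc_insert_le x hS a (x j)) 2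
      have hut : (0:ℝ) ≤ ((U.card:ℝ) - t) / U.card :=
        div_nonneg (by linarith) (le_of_lt hupos)
      have h1H : (0:ℝ) ≤ 1 + Hsum t := by linarith
      -- covered part
      have hcov : ∑ i ∈ X.filter (fun i => f i ∉ U), (w i * D S i ^ 2 / Z) * E i
          ≤ (Φc / Z) * ((Φc + 8 * φU) * (1 + Hsum t) + (((U.card:ℝ) - t) / U.card) * Φu) := by
        have step : ∀ i ∈ X.filter (fun i => f i ∉ U),
            (w i * D S i ^ 2 / Z) * E i
            ≤ (w i * D S i ^ 2 / Z) *
              ((Φc + 8 * φU) * (1 + Hsum t) + (((U.card:ℝ) - t) / U.card) * Φu) := by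
          intro i hi
          have hiX := (Finset.mem_filter.1 hi).1
          apply mul_le_mul_of_nonneg_left _ (hpn i hiX)
          have h1 := ih U (insert i S) (Finset.insert_nonempty i S) (Nat.le_of_succ_le htU)
          have h2 : (∑ j ∈ X.filter (fun i => f i ∉ U), w j * D (insert i S) j ^ 2) ≤ Φc :=
            monoS i _ (Finset.filter_subset _ _)
          have h3 : (∑ j ∈ X.filter (fun i => f i ∈ U), w j * D (insert i S) j ^ 2) ≤ Φu :=
            monoS i _ (Finset.filter_subset _ _)
          calc E i ≤ ((∑ j ∈ X.filter (fun i => f i ∉ U), w j * D (insert i S) j ^ 2)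
                + 8 * φU) * (1 + Hsum t)
                + (((U.card:ℝ) - t) / U.card) *
                  ∑ j ∈ X.filter (fun i => f i ∈ U), w j * D (insert i S) j ^ 2 := h1
            _ ≤ (Φc + 8 * φU) * (1 + Hsum t) + (((U.card:ℝ) - t) / U.card) * Φu := by
                apply add_le_add
                · exact mul_le_mul_of_nonneg_right (by linarith) h1H
                · exact mul_le_mul_of_nonneg_left h3 hut
        calc ∑ i ∈ X.filter (fun i => f i ∉ U), (w i * D S i ^ 2 / Z) * E i
            ≤ ∑ i ∈ X.filter (fun i => f i ∉ U), (w i * D S i ^ 2 / Z) *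
                ((Φc + 8 * φU) * (1 + Hsum t) + (((U.card:ℝ) - t) / U.card) * Φu) :=
              Finset.sum_le_sum step
          _ = (Φc / Z) * ((Φc + 8 * φU) * (1 + Hsum t) + (((U.card:ℝ) - t) / U.card) * Φu) := by
              rw [← Finset.sum_mul, ← Finset.sum_div]
      -- fiberwise decomposition
      have hfib : ∀ (g : ι → ℝ), ∑ q ∈ U, ∑ a ∈ X.filter (fun i => f i = q), g a
          = ∑ i ∈ X.filter (fun i => f i ∈ U), g i := by
        intro g
        rw [← Finset.sum_fiberwise_of_maps_to
          (fun i hi => (Finset.mem_filter.1 hi).2 : ∀ i ∈ X.filter (fun i => f i ∈ U), f i ∈ U) g]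
        apply Finset.sum_congr rfl
        intro q hq
        apply Finset.sum_congr _ (fun _ _ => rfl)
        rw [Finset.filter_filter]
        ext i
        simp only [Finset.mem_filter]
        constructor
        · rintro ⟨hiX, hfq⟩; exact ⟨hiX, hfq ▸ hq, hfq⟩
        · rintro ⟨hiX, _, hfq⟩; exact ⟨hiX, hfq⟩
      set Φf : κ → ℝ := fun q => ∑ a ∈ X.filter (fun i => f i = q), w a * D S a ^ 2 with hΦfdef
      have hΦfn : ∀ q, 0 ≤ Φf q := fun q =>
        Finset.sum_nonneg fun a ha => hwn a (Finset.mem_filter.1 ha).1 S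
      have hsumΦf : ∑ q ∈ U, Φf q = Φu := hfib _
      set c' : ℝ := ((U.card:ℝ) - 1 - t) / ((U.card:ℝ) - 1) with hc'def
      have hc'n : 0 ≤ c' := div_nonneg (by linarith) (by linarith)
      -- per uncovered cluster bound
      have hclu : ∀ q ∈ U, ∑ a ∈ X.filter (fun i => f i = q), (w a * D S a ^ 2 / Z) * E a
          ≤ (Φf q / Z) * ((Φc + 8 * φU) * (1 + Hsum t)) + c' * ((Φu - Φf q) * (Φf q / Z)) := by
        intro q hq
        have hcarderase : (U.erase q).card = U.card - 1 := Finset.card_erase_of_mem hq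
        have hcastera : ((U.erase q).card : ℝ) = (U.card:ℝ) - 1 := by
          rw [hcarderase, Nat.cast_sub hucard, Nat.cast_one]
        have hterase : t ≤ (U.erase q).card := by rw [hcarderase]; omega
        have hφerase : ∑ r ∈ U.erase q, φ r = φU - φ q := Finset.sum_erase_eq_sub hq
        -- the two finset splittings
        have hsetc : X.filter (fun i => f i ∉ U.erase q)
            = X.filter (fun i => f i = q) ∪ X.filter (fun i => f i ∉ U) := by
          ext i
          simp only [Finset.mem_filter, Finset.mem_union, Finset.mem_erase]
          constructor
          · rintro ⟨hiX, h⟩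
            by_cases hfi : f i = q
            · exact Or.inl ⟨hiX, hfi⟩
            · exact Or.inr ⟨hiX, fun hmem => h ⟨hfi, hmem⟩⟩
          · rintro (⟨hiX, h⟩ | ⟨hiX, h⟩)
            · exact ⟨hiX, fun hmem => hmem.1 h⟩
            · exact ⟨hiX, fun hmem => h hmem.2⟩
        have hdisjc : Disjoint (X.filter (fun i => f i = q)) (X.filter (fun i => f i ∉ U)) := by
          rw [Finset.disjoint_left]
          intro i hi hi'
          exact (Finset.mem_filter.1 hi').2 ((Finset.mem_filter.1 hi).2 ▸ hq)
        have hsetu : X.filter (fun i => f i ∈ U)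
            = X.filter (fun i => f i ∈ U.erase q) ∪ X.filter (fun i => f i = q) := by
          ext i
          simp only [Finset.mem_filter, Finset.mem_union, Finset.mem_erase]
          constructor
          · rintro ⟨hiX, h⟩
            by_cases hfi : f i = q
            · exact Or.inr ⟨hiX, hfi⟩
            · exact Or.inl ⟨hiX, hfi, h⟩
          · rintro (⟨hiX, h⟩ | ⟨hiX, h⟩)
            · exact ⟨hiX, h.2⟩
            · exact ⟨hiX, h ▸ hq⟩
        have hdisju : Disjoint (X.filter (fun i => f i ∈ U.erase q))
            (X.filter (fun i => f i = q)) := by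
          rw [Finset.disjoint_left]
          intro i hi hi'
          exact (Finset.mem_erase.1 (Finset.mem_filter.1 hi).2).1 (Finset.mem_filter.1 hi').2
        have huer : ∑ i ∈ X.filter (fun i => f i ∈ U.erase q), w i * D S i ^ 2
            = Φu - Φf q := by
          have h := Finset.sum_union hdisju (f := fun i => w i * D S i ^ 2)
          rw [← hsetu] at h
          have h2 : Φu = (∑ i ∈ X.filter (fun i => f i ∈ U.erase q), w i * D S i ^ 2)
              + ∑ a ∈ X.filter (fun i => f i = q), w a * D S a ^ 2 := h
          have h3 : Φf q = ∑ a ∈ X.filter (fun i => f i = q), w a * D S a ^ 2 := rfl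
          rw [h3]
          linarith [h2]
        -- per element bound
        have step : ∀ a ∈ X.filter (fun i => f i = q),
            (w a * D S a ^ 2 / Z) * E a
            ≤ (w a * D S a ^ 2 / Z) *
              ((Φc + (∑ j ∈ X.filter (fun i => f i = q),
                  w j * (min (D S j) ‖x j - x a‖) ^ 2) + 8 * (φU - φ q)) * (1 + Hsum t)
                + c' * (Φu - Φf q)) := by
          intro a ha
          have haX := (Finset.mem_filter.1 ha).1
          apply mul_le_mul_of_nonneg_left _ (hpn a haX)
          have h1 := ih (U.erase q) (insert a S) (Finset.insert_nonempty a S) hterase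
          rw [hφerase, hcastera] at h1
          -- bound the covered part of the erased configuration
          have hsplit2 : ∑ i ∈ X.filter (fun i => f i ∉ U.erase q), w i * D (insert a S) i ^ 2
              = (∑ i ∈ X.filter (fun i => f i = q), w i * D (insert a S) i ^ 2)
                + ∑ i ∈ X.filter (fun i => f i ∉ U), w i * D (insert a S) i ^ 2 := by
            rw [hsetc]
            exact Finset.sum_union hdisjc
          have hTa : ∑ i ∈ X.filter (fun i => f i = q), w i * D (insert a S) i ^ 2
              = ∑ j ∈ X.filter (fun i => f i = q), w j * (min (D S j) ‖x j - x a‖) ^ 2 := by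
            apply Finset.sum_congr rfl
            intro j _
            rw [hDdef]
            simp only
            rw [dtc_insert x hS a (x j), min_comm]
          have hcov2 : ∑ i ∈ X.filter (fun i => f i ∉ U), w i * D (insert a S) i ^ 2 ≤ Φc :=
            monoS a _ (Finset.filter_subset _ _)
          have huncov2 : ∑ i ∈ X.filter (fun i => f i ∈ U.erase q), w i * D (insert a S) i ^ 2
              ≤ Φu - Φf q := by
            rw [← huer]
            exact monoS a _ (Finset.filter_subset _ _)
          calc E a ≤ _ := h1
            _ ≤ ((Φc + (∑ j ∈ X.filter (fun i => f i = q),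
                  w j * (min (D S j) ‖x j - x a‖) ^ 2) + 8 * (φU - φ q)) * (1 + Hsum t)
                + c' * (Φu - Φf q)) := by
              apply add_le_add
              · apply mul_le_mul_of_nonneg_right _ h1H
                rw [hsplit2, hTa]
                linarith [hcov2]
              · exact mul_le_mul_of_nonneg_left huncov2 hc'n
        -- sum the per-element bounds and apply Lemma C
        have hsum1 : ∑ a ∈ X.filter (fun i => f i = q), w a * D S a ^ 2 / Z = Φf q / Z :=
          (Finset.sum_div _ _ _).symm
        have hCq := hC q S hS
        calc ∑ a ∈ X.filter (fun i => f i = q), (w a * D S a ^ 2 / Z) * E a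
            ≤ ∑ a ∈ X.filter (fun i => f i = q), (w a * D S a ^ 2 / Z) *
              ((Φc + (∑ j ∈ X.filter (fun i => f i = q),
                  w j * (min (D S j) ‖x j - x a‖) ^ 2) + 8 * (φU - φ q)) * (1 + Hsum t)
                + c' * (Φu - Φf q)) := Finset.sum_le_sum step
          _ = (Φf q / Z) * (((Φc + 8 * (φU - φ q)) * (1 + Hsum t)) + c' * (Φu - Φf q))
              + (1 + Hsum t) / Z * ∑ a ∈ X.filter (fun i => f i = q),
                  (w a * D S a ^ 2) * ∑ j ∈ X.filter (fun i => f i = q),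
                    w j * (min (D S j) ‖x j - x a‖) ^ 2 := by
              have hfq : Φf q = ∑ a ∈ X.filter (fun i => f i = q), w a * D S a ^ 2 := rfl
              have expand : ∀ a ∈ X.filter (fun i => f i = q),
                  (w a * D S a ^ 2 / Z) *
                    ((Φc + (∑ j ∈ X.filter (fun i => f i = q),
                        w j * (min (D S j) ‖x j - x a‖) ^ 2) + 8 * (φU - φ q)) * (1 + Hsum t)
                      + c' * (Φu - Φf q))
                  = (w a * D S a ^ 2) *
                      ((((Φc + 8 * (φU - φ q)) * (1 + Hsum t)) + c' * (Φu - Φf q)) / Z)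
                    + (1 + Hsum t) / Z * ((w a * D S a ^ 2) *
                        ∑ j ∈ X.filter (fun i => f i = q),
                          w j * (min (D S j) ‖x j - x a‖) ^ 2) := by
                intro a _
                ring
              rw [Finset.sum_congr rfl expand, Finset.sum_add_distrib, ← Finset.sum_mul,
                ← Finset.mul_sum, ← hfq]
              ring
          _ ≤ (Φf q / Z) * (((Φc + 8 * (φU - φ q)) * (1 + Hsum t)) + c' * (Φu - Φf q))
              + (1 + Hsum t) / Z * (8 * φ q * Φf q) := by
              apply add_le_add_right
              apply mul_le_mul_of_nonneg_left _ (div_nonneg h1H hZn)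
              exact hCq
          _ = (Φf q / Z) * ((Φc + 8 * φU) * (1 + Hsum t)) + c' * ((Φu - Φf q) * (Φf q / Z)) := by
              field_simp
              ring
      -- uncovered part: sum the per-cluster bounds
      have huncov : ∑ i ∈ X.filter (fun i => f i ∈ U), (w i * D S i ^ 2 / Z) * E i
          ≤ (Φu / Z) * ((Φc + 8 * φU) * (1 + Hsum t))
            + c' * ((Φu * Φu - ∑ q ∈ U, Φf q ^ 2) / Z) := by
        rw [← hfib (fun i => (w i * D S i ^ 2 / Z) * E i)]
        calc ∑ q ∈ U, ∑ a ∈ X.filter (fun i => f i = q), (w a * D S a ^ 2 / Z) * E a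
            ≤ ∑ q ∈ U, ((Φf q / Z) * ((Φc + 8 * φU) * (1 + Hsum t))
                + c' * ((Φu - Φf q) * (Φf q / Z))) := Finset.sum_le_sum hclu
          _ = (Φu / Z) * ((Φc + 8 * φU) * (1 + Hsum t))
                + c' * ((Φu * Φu - ∑ q ∈ U, Φf q ^ 2) / Z) := by
              have e1 : ∀ q ∈ U, (Φf q / Z) * ((Φc + 8 * φU) * (1 + Hsum t))
                  + c' * ((Φu - Φf q) * (Φf q / Z))
                  = Φf q * (((Φc + 8 * φU) * (1 + Hsum t)) / Z)
                    + c' / Z * (Φu * Φf q - Φf q ^ 2) := by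
                intro q _
                ring
              rw [Finset.sum_congr rfl e1, Finset.sum_add_distrib, ← Finset.sum_mul,
                ← Finset.mul_sum, hsumΦf, Finset.sum_sub_distrib, ← Finset.mul_sum, hsumΦf]
              ring
      -- Cauchy-Schwarz
      have hCS : Φu ^ 2 ≤ (U.card:ℝ) * ∑ q ∈ U, Φf q ^ 2 := by
        rw [← hsumΦf]
        exact sq_sum_le_card_mul_sum_sq
      have hQn : (0:ℝ) ≤ ∑ q ∈ U, Φf q ^ 2 := Finset.sum_nonneg fun q _ => sq_nonneg _
      have hZne : Z ≠ 0 := ne_of_gt hZpos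
      have hune : (U.card:ℝ) ≠ 0 := ne_of_gt hupos
      set Q : ℝ := ∑ q ∈ U, Φf q ^ 2 with hQdef
      set K : ℝ := Φc + 8 * φU with hKdef
      have hKn : 0 ≤ K := by rw [hKdef]; linarith
      -- c2 : quadratic term bound
      have c2 : c' * ((Φu * Φu - Q) / Z) ≤ (((U.card:ℝ) - 1 - t) / U.card) * (Φu ^ 2 / Z) := by
        rcases eq_or_lt_of_le hucard with hu1 | hu2
        · -- U.card = 1, hence t = 0 and c' = 0
          have ht0 : t = 0 := by omega
          have hcast1 : (U.card:ℝ) = 1 := by exact_mod_cast hu1.symm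
          have hc'0 : c' = 0 := by
            rw [hc'def, hcast1, ht0]
            norm_num
          rw [hc'0, hcast1, ht0]
          norm_num
        · have hu1pos : (0:ℝ) < (U.card:ℝ) - 1 := by
            have : (2:ℝ) ≤ (U.card:ℝ) := by exact_mod_cast hu2
            linarith
          have hQlb : Φu ^ 2 / (U.card:ℝ) ≤ Q := by
            rw [div_le_iff₀ hupos]
            linarith [hCS]
          have hstep1 : Φu * Φu - Q ≤ Φu ^ 2 * ((U.card:ℝ) - 1) / (U.card:ℝ) := by
            have e : Φu ^ 2 * ((U.card:ℝ) - 1) / (U.card:ℝ)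
                = Φu ^ 2 - Φu ^ 2 / (U.card:ℝ) := by field_simp
            rw [e]
            have hsq : Φu * Φu = Φu ^ 2 := (sq Φu).symm
            linarith [hQlb]
          calc c' * ((Φu * Φu - Q) / Z)
              ≤ c' * ((Φu ^ 2 * ((U.card:ℝ) - 1) / (U.card:ℝ)) / Z) := by
                apply mul_le_mul_of_nonneg_left _ hc'n
                exact (div_le_div_iff_of_pos_right hZpos).2 hstep1
            _ = (((U.card:ℝ) - 1 - t) / U.card) * (Φu ^ 2 / Z) := by
                rw [hc'def]
                field_simp
      -- final combination
      have e2 : (Φu ^ 2 + Φc * Φu) / Z = Φu := by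
        have h : Φu ^ 2 + Φc * Φu = Φu * Z := by rw [← hsplit]; ring
        rw [h, mul_div_assoc, div_self hZne, mul_one]
      have t2 : (Φc * Φu) / ((U.card:ℝ) * Z) ≤ K / ((t:ℝ) + 1) := by
        have h1 : (Φc * Φu) / ((U.card:ℝ) * Z) ≤ (Φc * Z) / ((U.card:ℝ) * Z) := by
          apply (div_le_div_iff_of_pos_right (mul_pos hupos hZpos)).2
          exact mul_le_mul_of_nonneg_left (by linarith [hsplit]) hΦcn
        have h2 : (Φc * Z) / ((U.card:ℝ) * Z) = Φc / (U.card:ℝ) := by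
          rw [mul_div_mul_right _ _ hZne]
        have h3 : Φc / (U.card:ℝ) ≤ Φc / ((t:ℝ) + 1) := by
          apply div_le_div_of_nonneg_left hΦcn (by positivity) htu
        have h4 : Φc / ((t:ℝ) + 1) ≤ K / ((t:ℝ) + 1) := by
          apply (div_le_div_iff_of_pos_right (by positivity)).2
          rw [hKdef]; linarith
        linarith
      have c3 : (((U.card:ℝ) - 1 - t) / U.card) * (Φu ^ 2 / Z)
          + (Φc / Z) * ((((U.card:ℝ) - t) / U.card) * Φu)
          ≤ (((U.card:ℝ) - t - 1) / U.card) * Φu + K / ((t:ℝ) + 1) := by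
        have e : (((U.card:ℝ) - 1 - t) / U.card) * (Φu ^ 2 / Z)
            + (Φc / Z) * ((((U.card:ℝ) - t) / U.card) * Φu)
            = (((U.card:ℝ) - t - 1) / U.card) * ((Φu ^ 2 + Φc * Φu) / Z)
              + (Φc * Φu) / ((U.card:ℝ) * Z) := by
          field_simp
          ring
        rw [e, e2]
        linarith [t2]
      calc ∑ i ∈ X, (w i * D S i ^ 2 / Z) * E i
          = (∑ i ∈ X.filter (fun i => f i ∈ U), (w i * D S i ^ 2 / Z) * E i)
            + ∑ i ∈ X.filter (fun i => f i ∉ U), (w i * D S i ^ 2 / Z) * E i :=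
            (Finset.sum_filter_add_sum_filter_not X _ _).symm
        _ ≤ ((Φu / Z) * (K * (1 + Hsum t)) + c' * ((Φu * Φu - Q) / Z))
            + (Φc / Z) * (K * (1 + Hsum t) + (((U.card:ℝ) - t) / U.card) * Φu) :=
            add_le_add huncov hcov
        _ = K * (1 + Hsum t) * ((Φu + Φc) / Z)
            + (c' * ((Φu * Φu - Q) / Z) + (Φc / Z) * ((((U.card:ℝ) - t) / U.card) * Φu)) := by
            ring
        _ = K * (1 + Hsum t)
            + (c' * ((Φu * Φu - Q) / Z) + (Φc / Z) * ((((U.card:ℝ) - t) / U.card) * Φu)) := by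
            rw [hsplit, div_self hZne, mul_one]
        _ ≤ K * (1 + Hsum t)
            + ((((U.card:ℝ) - 1 - t) / U.card) * (Φu ^ 2 / Z)
              + (Φc / Z) * ((((U.card:ℝ) - t) / U.card) * Φu)) := by
            linarith [c2]
        _ ≤ K * (1 + Hsum t) + ((((U.card:ℝ) - t - 1) / U.card) * Φu + K / ((t:ℝ) + 1)) := by
            linarith [c3]
        _ = K * (1 + Hsum (t + 1)) + (((U.card:ℝ) - ((t:ℕ)+1 : ℕ)) / U.card) * Φu := by
            rw [Hsum_succ]
            push_cast
            ring


end KeyLemma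

section Final
variable {d : ℕ} {ι : Type*} [DecidableEq ι]

theorem perP (X : Finset ι) (x : ι → EuclideanSpace ℝ (Fin d)) (w : ι → ℝ)
    (hw : ∀ i ∈ X, 0 ≤ w i) (hW : 0 < ∑ i ∈ X, w i)
    (k : ℕ) (hk : 1 ≤ k) (P : Finset (EuclideanSpace ℝ (Fin d))) (hP : P.card = k) :
    ∑ i ∈ X, (w i / ∑ j ∈ X, w j) * expCostD2 X x w {i} (k - 1)
      ≤ 8 * (Real.log k + 2) * kmeansCost X x w P := by
  classical
  have hPne : P.Nonempty := Finset.card_pos.1 (hP ▸ hk)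
  -- nearest-center assignment
  set f : ι → EuclideanSpace ℝ (Fin d) := fun i =>
    Classical.choose (Finset.exists_mem_eq_inf' hPne (fun p => ‖x i - p‖)) with hfdef
  have hf1 : ∀ i, f i ∈ P := fun i =>
    (Classical.choose_spec (Finset.exists_mem_eq_inf' hPne (fun p => ‖x i - p‖))).1
  have hf2 : ∀ i, P.inf' hPne (fun p => ‖x i - p‖) = ‖x i - f i‖ := fun i =>
    (Classical.choose_spec (Finset.exists_mem_eq_inf' hPne (fun p => ‖x i - p‖))).2
  set φ : EuclideanSpace ℝ (Fin d) → ℝ :=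
    fun q => phiStar x w (X.filter (fun i => f i = q)) with hφdef
  have hφn : ∀ q, 0 ≤ φ q := fun q =>
    phiStar_nonneg x w _ (fun i hi => hw i (Finset.filter_subset _ _ hi))
  have hC : ∀ (q : EuclideanSpace ℝ (Fin d)) (S : Finset ι), S.Nonempty →
      ∑ a ∈ X.filter (fun i => f i = q), (w a * distToCenters x S (x a) ^ 2) *
        (∑ j ∈ X.filter (fun i => f i = q),
          w j * (min (distToCenters x S (x j)) ‖x j - x a‖) ^ 2)
      ≤ 8 * φ q * ∑ a ∈ X.filter (fun i => f i = q), w a * distToCenters x S (x a) ^ 2 :=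
    fun q S hS => lemmaC x w _ (fun i hi => hw i (Finset.filter_subset _ _ hi)) hS
  set W : ℝ := ∑ i ∈ X, w i with hWdef
  set H : ℝ := Hsum (k-1) with hHdef
  have hHn : 0 ≤ H := Hsum_nonneg _
  set φP : ℝ := ∑ q ∈ P, φ q with hφPdef
  have hφPn : 0 ≤ φP := Finset.sum_nonneg fun q _ => hφn q
  -- fiberwise decomposition of X by f (into P)
  have hfib : ∀ (g : ι → ℝ), ∑ q ∈ P, ∑ a ∈ X.filter (fun i => f i = q), g a
      = ∑ i ∈ X, g i := fun g => Finset.sum_fiberwise_of_maps_to (fun i _ => hf1 i) g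
  -- the per-first-center bound
  have hbound : ∀ i ∈ X, expCostD2 X x w {i} (k-1)
      ≤ ((∑ j ∈ X.filter (fun j => f j = f i), w j * ‖x j - x i‖ ^ 2)
          + 8 * (φP - φ (f i))) * (1 + H) := by
    intro i _
    have hkey := keyInduction X x w hw f φ hφn hC (k-1) (P.erase (f i)) {i}
      (Finset.singleton_nonempty i) (by rw [Finset.card_erase_of_mem (hf1 i), hP])
    have hcard : (P.erase (f i)).card = k - 1 := by
      rw [Finset.card_erase_of_mem (hf1 i), hP]
    rw [hcard] at hkey
    have hzero : (((k-1 : ℕ):ℝ) - ((k-1 : ℕ):ℝ)) / ((k-1 : ℕ):ℝ) = 0 := by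
      rw [sub_self, zero_div]
    rw [hzero, zero_mul, add_zero] at hkey
    have hfilter : X.filter (fun j => f j ∉ P.erase (f i)) = X.filter (fun j => f j = f i) := by
      ext j
      simp only [Finset.mem_filter, Finset.mem_erase]
      constructor
      · rintro ⟨hjX, h⟩
        refine ⟨hjX, ?_⟩
        by_contra hne
        exact h ⟨hne, hf1 j⟩
      · rintro ⟨hjX, h⟩
        exact ⟨hjX, fun hmem => hmem.1 h⟩
    rw [hfilter, Finset.sum_erase_eq_sub (hf1 i)] at hkey
    calc expCostD2 X x w {i} (k-1) ≤ _ := hkey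
      _ = ((∑ j ∈ X.filter (fun j => f j = f i), w j * ‖x j - x i‖ ^ 2)
          + 8 * (φP - φ (f i))) * (1 + H) := by
        have he : ∀ j ∈ X.filter (fun j => f j = f i),
            w j * distToCenters x {i} (x j) ^ 2 = w j * ‖x j - x i‖ ^ 2 :=
          fun j _ => by rw [dtc_singleton x i (x j)]
        rw [Finset.sum_congr rfl he]
  -- average over first centers
  have havg : ∑ i ∈ X, (w i / W) * expCostD2 X x w {i} (k - 1)
      ≤ (1 + H) / W * ∑ i ∈ X, w i *
        ((∑ j ∈ X.filter (fun j => f j = f i), w j * ‖x j - x i‖ ^ 2)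
          + 8 * (φP - φ (f i))) := by
    rw [Finset.mul_sum]
    apply Finset.sum_le_sum
    intro i hi
    have h1 : (w i / W) * expCostD2 X x w {i} (k - 1)
        ≤ (w i / W) * (((∑ j ∈ X.filter (fun j => f j = f i), w j * ‖x j - x i‖ ^ 2)
            + 8 * (φP - φ (f i))) * (1 + H)) :=
      mul_le_mul_of_nonneg_left (hbound i hi) (div_nonneg (hw i hi) (le_of_lt hW))
    calc (w i / W) * expCostD2 X x w {i} (k - 1) ≤ _ := h1
      _ = (1 + H) / W * (w i * ((∑ j ∈ X.filter (fun j => f j = f i), w j * ‖x j - x i‖ ^ 2)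
            + 8 * (φP - φ (f i)))) := by ring
  -- the per-cluster averaging bound
  have hmain : ∑ i ∈ X, w i *
        ((∑ j ∈ X.filter (fun j => f j = f i), w j * ‖x j - x i‖ ^ 2)
          + 8 * (φP - φ (f i))) ≤ 8 * φP * W := by
    have hg := hfib (fun i => w i * ((∑ j ∈ X.filter (fun j => f j = f i), w j * ‖x j - x i‖ ^ 2)
          + 8 * (φP - φ (f i))) : ι → ℝ)
    rw [← hg]
    have hcluster : ∀ q ∈ P, ∑ a ∈ X.filter (fun i => f i = q),
        w a * ((∑ j ∈ X.filter (fun j => f j = f a), w j * ‖x j - x a‖ ^ 2)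
          + 8 * (φP - φ (f a)))
        ≤ 8 * φP * ∑ a ∈ X.filter (fun i => f i = q), w a := by
      intro q _
      have hwq : ∀ i ∈ X.filter (fun i => f i = q), 0 ≤ w i :=
        fun i hi => hw i (Finset.filter_subset _ _ hi)
      have hWqn : 0 ≤ ∑ a ∈ X.filter (fun i => f i = q), w a := Finset.sum_nonneg hwq
      have hcongr : ∀ a ∈ X.filter (fun i => f i = q),
          w a * ((∑ j ∈ X.filter (fun j => f j = f a), w j * ‖x j - x a‖ ^ 2)
            + 8 * (φP - φ (f a)))
          = w a * (∑ j ∈ X.filter (fun j => f j = q), w j * ‖x j - x a‖ ^ 2)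
            + w a * (8 * (φP - φ q)) := by
        intro a ha
        have hfa : f a = q := (Finset.mem_filter.1 ha).2
        rw [hfa]
        ring
      rw [Finset.sum_congr rfl hcongr, Finset.sum_add_distrib, ← Finset.sum_mul]
      rw [pairwise_identity x w _ hwq]
      have hφq : φ q = phiStar x w (X.filter (fun i => f i = q)) := rfl
      have hφqn := hφn q
      rw [← hφq]
      nlinarith [hWqn, hφqn, hφPn]
    calc ∑ q ∈ P, ∑ a ∈ X.filter (fun i => f i = q),
          w a * ((∑ j ∈ X.filter (fun j => f j = f a), w j * ‖x j - x a‖ ^ 2)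
            + 8 * (φP - φ (f a)))
        ≤ ∑ q ∈ P, 8 * φP * ∑ a ∈ X.filter (fun i => f i = q), w a :=
          Finset.sum_le_sum hcluster
      _ = 8 * φP * W := by
          rw [← Finset.mul_sum, hfib (fun i => w i)]
  -- opt cost lower bound
  have hopt : φP ≤ kmeansCost X x w P := by
    have hcost : kmeansCost X x w P = ∑ i ∈ X, w i * ‖x i - f i‖ ^ 2 := by
      apply Finset.sum_congr rfl
      intro i _
      rw [dif_pos hPne, hf2 i]
    rw [hcost, ← hfib (fun i => w i * ‖x i - f i‖ ^ 2)]
    apply Finset.sum_le_sum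
    intro q _
    have hwq : ∀ i ∈ X.filter (fun i => f i = q), 0 ≤ w i :=
      fun i hi => hw i (Finset.filter_subset _ _ hi)
    calc φ q ≤ ∑ i ∈ X.filter (fun i => f i = q), w i * ‖x i - q‖ ^ 2 :=
          phiStar_le x w _ hwq q
      _ = ∑ i ∈ X.filter (fun i => f i = q), w i * ‖x i - f i‖ ^ 2 := by
          apply Finset.sum_congr rfl
          intro i hi
          rw [(Finset.mem_filter.1 hi).2]
  -- put everything together
  have hcostn : 0 ≤ kmeansCost X x w P :=
    Finset.sum_nonneg fun i hi => mul_nonneg (hw i hi) (by positivity)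
  have hlogn : (0:ℝ) ≤ Real.log k := Real.log_natCast_nonneg k
  have hH2 : 1 + H ≤ Real.log k + 2 := by
    have := Hsum_pred_le k hk
    rw [hHdef]
    linarith
  calc ∑ i ∈ X, (w i / W) * expCostD2 X x w {i} (k - 1)
      ≤ (1 + H) / W * ∑ i ∈ X, w i *
        ((∑ j ∈ X.filter (fun j => f j = f i), w j * ‖x j - x i‖ ^ 2)
          + 8 * (φP - φ (f i))) := havg
    _ ≤ (1 + H) / W * (8 * φP * W) := by
        apply mul_le_mul_of_nonneg_left hmain (div_nonneg (by linarith) (le_of_lt hW))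
    _ = 8 * φP * (1 + H) := by
        field_simp
    _ ≤ 8 * (Real.log k + 2) * kmeansCost X x w P := by
        have h1 : 8 * φP * (1 + H) ≤ 8 * kmeansCost X x w P * (1 + H) := by
          apply mul_le_mul_of_nonneg_right _ (by linarith)
          linarith
        have h2 : 8 * kmeansCost X x w P * (1 + H)
            ≤ 8 * kmeansCost X x w P * (Real.log k + 2) := by
          apply mul_le_mul_of_nonneg_left hH2 (by linarith)
        linarith


end Final

/-- Theorem 3: weighted-D² sampling (first center chosen with probability ∝ wᵢ,
subsequent centers with probability ∝ wᵢ·D(xᵢ)²) is `8(ln k + 2)`-competitive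
in expectation for the weighted k-means problem. -/
theorem weighted_D2_sampling_guarantee {d : ℕ} {ι : Type*} [DecidableEq ι]
    (X : Finset ι) (x : ι → EuclideanSpace ℝ (Fin d)) (w : ι → ℝ)
    (hw : ∀ i ∈ X, 0 ≤ w i) (hW : 0 < ∑ i ∈ X, w i)
    (k : ℕ) (hk : 1 ≤ k)
    (ΦOPT : ℝ)
    (hOPT : ΦOPT = sInf {r : ℝ | ∃ P : Finset (EuclideanSpace ℝ (Fin d)),
        P.card = k ∧ r = kmeansCost X x w P}) :
    ∑ i ∈ X, (w i / ∑ j ∈ X, w j) * expCostD2 X x w {i} (k - 1)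
      ≤ 8 * (Real.log k + 2) * ΦOPT := by
  classical
  have hlogn : (0:ℝ) ≤ Real.log k := Real.log_natCast_nonneg k
  have hc0 : (0:ℝ) < 8 * (Real.log k + 2) := by linarith
  by_cases hA : {r : ℝ | ∃ P : Finset (EuclideanSpace ℝ (Fin d)),
      P.card = k ∧ r = kmeansCost X x w P}.Nonempty
  · have h1 : (∑ i ∈ X, (w i / ∑ j ∈ X, w j) * expCostD2 X x w {i} (k - 1))
        / (8 * (Real.log k + 2)) ≤ sInf {r : ℝ | ∃ P : Finset (EuclideanSpace ℝ (Fin d)),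
          P.card = k ∧ r = kmeansCost X x w P} := by
      apply le_csInf hA
      rintro r ⟨P, hPk, rfl⟩
      rw [div_le_iff₀ hc0]
      calc ∑ i ∈ X, (w i / ∑ j ∈ X, w j) * expCostD2 X x w {i} (k - 1)
          ≤ 8 * (Real.log k + 2) * kmeansCost X x w P := perP X x w hw hW k hk P hPk
        _ = kmeansCost X x w P * (8 * (Real.log k + 2)) := by ring
    rw [hOPT]
    rw [div_le_iff₀ hc0] at h1
    linarith [h1]
  · -- the set of candidate costs is empty: only possible if `d = 0` and `k ≥ 2`
    have hempty : ∀ P : Finset (EuclideanSpace ℝ (Fin d)), P.card ≠ k := by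
      intro P hPk
      exact hA ⟨_, P, hPk, rfl⟩
    have hset : {r : ℝ | ∃ P : Finset (EuclideanSpace ℝ (Fin d)),
        P.card = k ∧ r = kmeansCost X x w P} = ∅ := Set.not_nonempty_iff_eq_empty.1 hA
    rw [hOPT, hset, Real.sInf_empty, mul_zero]
    rcases Nat.eq_zero_or_pos d with hd0 | hdpos
    · subst hd0
      have hk2 : 2 ≤ k := by
        by_contra h
        have hk1 : k = 1 := by omega
        exact hempty {(0 : EuclideanSpace ℝ (Fin 0))} (by simp [hk1])
      have hdtc : ∀ (S : Finset ι) (q : EuclideanSpace ℝ (Fin 0)), S.Nonempty →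
          distToCenters x S q = 0 := by
        intro S q hS
        obtain ⟨j, hj⟩ := hS
        unfold distToCenters
        rw [dif_pos ⟨j, hj⟩]
        apply le_antisymm
        · calc S.inf' ⟨j, hj⟩ (fun j => ‖q - x j‖) ≤ ‖q - x j‖ := Finset.inf'_le _ hj
            _ = 0 := by
              rw [show q - x j = 0 by ext i; exact i.elim0]
              exact norm_zero
        · exact Finset.le_inf' _ _ fun b _ => norm_nonneg _
      obtain ⟨t, ht⟩ : ∃ t, k - 1 = t + 1 := ⟨k - 2, by omega⟩
      rw [ht]
      apply le_of_eq
      apply Finset.sum_eq_zero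
      intro i _
      have hzero : expCostD2 X x w {i} (t + 1) = 0 := by
        show (∑ j ∈ X, (w j * (distToCenters x {i} (x j)) ^ 2 /
            ∑ j' ∈ X, w j' * (distToCenters x {i} (x j')) ^ 2) *
          expCostD2 X x w (insert j {i}) t) = 0
        apply Finset.sum_eq_zero
        intro j _
        rw [hdtc {i} (x j) (Finset.singleton_nonempty i)]
        norm_num
      rw [hzero, mul_zero]
    · -- `d ≥ 1`: the space is infinite so a `k`-element set exists; contradiction
      have : Infinite (EuclideanSpace ℝ (Fin d)) := by
        apply Infinite.of_injective
          (fun r : ℝ => EuclideanSpace.single (⟨0, hdpos⟩ : Fin d) r)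
        intro a b h
        have h2 := congrArg (fun v : EuclideanSpace ℝ (Fin d) => v ⟨0, hdpos⟩) h
        simpa [EuclideanSpace.single_apply] using h2
      obtain ⟨P, hPk⟩ := Infinite.exists_subset_card_eq (EuclideanSpace ℝ (Fin d)) k
      exact absurd hPk (hempty P)
end
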